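/- The germ C_{3,2m}: y³ + y²x² - x^{2m} = 0 at the origin with m ≥ 4 has exactly three smooth branches L₁, L₂, L₃, where L₁: y + x² + (higher) = 0 and L₂, L₃: y ± x^{m-1} + (higher) = 0; moreover the germ (L₂ ∪ L₃, O) is an A_{2m-3} singularity and (L₁ ∪ L₂, O) is an A_3 singularity. -/

import Mathlib

noncomputable section

/-- The ring of formal power series in two variables over ℂ, modelling germs of
plane curves at a point. -/
abbrev R2 : Type := MvPowerSeries (Fin 2) ℂ

/-- The local coordinate `x`. -/
def xx : R2 := MvPowerSeries.X 0

/-- The local coordinate `y`. -/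
def yy : R2 := MvPowerSeries.X 1

/-- The maximal ideal `(x, y)` of the local ring of germs. -/
def mIdeal : Ideal R2 := Ideal.span {xx, yy}

/-- Two germs are (formally) analytically equivalent if they differ by a local
analytic change of coordinates and a unit. -/
def AnalyticEquiv (F G : R2) : Prop :=
  ∃ (φ : R2 ≃ₐ[ℂ] R2) (u : R2), IsUnit u ∧ F = u * φ G

/-- A germ defines a smooth branch iff it lies in the maximal ideal but not in
its square. -/
def IsSmoothGerm (F : R2) : Prop := F ∈ mIdeal ∧ F ∉ mIdeal ^ 2

/-- The local intersection multiplicity of two germs: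
`I(F,G;O) = dim_ℂ ℂ⟦x,y⟧/(F,G)`. -/
def interMult (F G : R2) : ℕ := Module.finrank ℂ (R2 ⧸ Ideal.span {F, G})


namespace Aux

open MvPowerSeries

def deg (d : Fin 2 →₀ ℕ) : ℕ := d 0 + d 1

lemma deg_add (d e : Fin 2 →₀ ℕ) : deg (d + e) = deg d + deg e := by
  simp only [deg, Finsupp.add_apply]; ring

def V (n : ℕ) : Ideal R2 where
  carrier := {f | ∀ d, deg d < n → coeff d f = 0}
  add_mem' := by intro a b ha hb d hd; simp [ha d hd, hb d hd]
  zero_mem' := by intro d hd; simp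
  smul_mem' := by
    intro c f hf d hd
    rw [smul_eq_mul, coeff_mul]
    apply Finset.sum_eq_zero
    rintro ⟨e, e'⟩ he
    rw [Finset.HasAntidiagonal.mem_antidiagonal] at he
    have h2 : deg e' < n := by
      have := deg_add e e'
      rw [he] at this
      omega
    simp [hf e' h2]

lemma mem_V {n : ℕ} {f : R2} : f ∈ V n ↔ ∀ d, deg d < n → coeff d f = 0 := Iff.rfl

lemma mul_mem_V {a b : ℕ} {f g : R2} (hf : f ∈ V a) (hg : g ∈ V b) : f * g ∈ V (a + b) := by
  intro d hd
  rw [coeff_mul]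
  apply Finset.sum_eq_zero
  rintro ⟨e, e'⟩ he
  rw [Finset.HasAntidiagonal.mem_antidiagonal] at he
  have hde : deg e + deg e' = deg d := by rw [← deg_add, he]
  rcases lt_or_ge (deg e) a with h | h
  · simp [hf e h]
  · have : deg e' < b := by omega
    simp [hg e' this]

lemma X_mem_V (i : Fin 2) : (X i : R2) ∈ V 1 := by
  intro d hd
  have hd0 : d = 0 := by
    ext j
    fin_cases j <;> simp [deg] at hd ⊢ <;> omega
  rw [hd0]
  simp [coeff_zero_X]

lemma m_le_V1 : mIdeal ≤ V 1 := by
  rw [mIdeal, Ideal.span_le]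
  rintro f (rfl | rfl)
  · exact X_mem_V 0
  · exact X_mem_V 1

lemma pow_le_V (n : ℕ) : mIdeal ^ n ≤ V n := by
  induction n with
  | zero => intro f _ d hd; omega
  | succ n ih =>
    rw [pow_succ]
    apply Ideal.mul_le.2
    intro f hf g hg
    exact mul_mem_V (ih hf) (m_le_V1 hg)

/-- single 0 / single 1 helpers -/
lemma coeff_X_mul (i : Fin 2) (g : R2) (d : Fin 2 →₀ ℕ) :
    coeff d ((X i : R2) * g) =
      if Finsupp.single i 1 ≤ d then coeff (d - Finsupp.single i 1) g else 0 := by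
  rw [X_def, coeff_monomial_mul, one_mul]

lemma V_le_pow (n : ℕ) : V n ≤ mIdeal ^ n := by
  induction n with
  | zero => intro f _; simp
  | succ n ih =>
    intro f hf
    set e0 : Fin 2 →₀ ℕ := Finsupp.single 0 1
    set e1 : Fin 2 →₀ ℕ := Finsupp.single 1 1
    set g : R2 := fun d => f (d + e0) with hgdef
    set h : R2 := fun d => if d 0 = 0 then f (d + e1) else 0 with hhdef
    have hcg : ∀ d, coeff d g = f (d + e0) := fun d => rfl
    have hch : ∀ d, coeff d h = if d 0 = 0 then f (d + e1) else 0 := fun d => rfl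
    have hdecomp : f = xx * g + yy * h := by
      ext d
      rw [map_add, xx, yy, coeff_X_mul, coeff_X_mul]
      have hco : coeff d f = f d := rfl
      by_cases h0 : d 0 = 0
      · by_cases h1 : d 1 = 0
        · have hd0 : d = 0 := by ext j; fin_cases j <;> simp [h0, h1]
          have hn0 : ¬ (e0 ≤ d) := by
            rw [Finsupp.single_le_iff, hd0]; simp
          have hn1 : ¬ (e1 ≤ d) := by
            rw [Finsupp.single_le_iff, hd0]; simp
          rw [if_neg hn0, if_neg hn1, add_zero]
          exact hf d (by simp [hd0, deg])
        · have hle1 : e1 ≤ d := by rw [Finsupp.single_le_iff]; omega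
          have hnle0 : ¬ (e0 ≤ d) := by rw [Finsupp.single_le_iff]; omega
          rw [if_neg hnle0, if_pos hle1, hch]
          have hs0 : (d - e1) 0 = 0 := by
            rw [Finsupp.tsub_apply]; simp [e1, Finsupp.single_apply, h0]
          rw [if_pos hs0, tsub_add_cancel_of_le hle1, hco, zero_add]
      · have hle0 : e0 ≤ d := by rw [Finsupp.single_le_iff]; omega
        rw [if_pos hle0, hcg, tsub_add_cancel_of_le hle0, hco]
        by_cases hle1 : e1 ≤ d
        · rw [if_pos hle1, hch]
          have : ¬ ((d - e1) 0 = 0) := by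
            rw [Finsupp.tsub_apply]; simp [e1, Finsupp.single_apply]; omega
          rw [if_neg this, add_zero]
        · rw [if_neg hle1, add_zero]
    have hg : g ∈ V n := by
      intro d hd
      rw [hcg]
      apply hf
      have : deg (d + e0) = deg d + 1 := by
        rw [deg_add]; simp [deg, e0]
      omega
    have hh : h ∈ V n := by
      intro d hd
      rw [hch]
      by_cases h0 : d 0 = 0
      · rw [if_pos h0]
        apply hf
        have : deg (d + e1) = deg d + 1 := by
          rw [deg_add]; simp [deg, e1]
        omega
      · rw [if_neg h0]
    rw [hdecomp, pow_succ']
    refine Ideal.add_mem _ ?_ ?_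
    · exact Ideal.mul_mem_mul (Ideal.subset_span (by simp)) (ih hg)
    · exact Ideal.mul_mem_mul (Ideal.subset_span (by simp)) (ih hh)

lemma pow_eq_V (n : ℕ) : mIdeal ^ n = V n := le_antisymm (pow_le_V n) (V_le_pow n)

end Aux

namespace Aux

open MvPowerSeries

lemma xx_mem : xx ∈ mIdeal := Ideal.subset_span (by simp)
lemma yy_mem : yy ∈ mIdeal := Ideal.subset_span (by simp)

lemma mem_m_iff {f : R2} : f ∈ mIdeal ↔ constantCoeff (σ := Fin 2) (R := ℂ) f = 0 := by
  constructor
  · intro hf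
    have := m_le_V1 hf 0 (by simp [deg])
    simpa using this
  · intro hf
    have hv : f ∈ V 1 := by
      intro d hd
      have hd0 : d = 0 := by
        ext j; fin_cases j <;> simp [deg] at hd ⊢ <;> omega
      rw [hd0]
      simpa using hf
    have := V_le_pow 1 hv
    rwa [pow_one] at this

lemma pow_mem_pow_of_le {f : R2} (hf : f ∈ mIdeal) {k n : ℕ} (h : n ≤ k) :
    f ^ k ∈ mIdeal ^ n :=
  Ideal.pow_le_pow_right h (Ideal.pow_mem_pow hf k)

lemma xx_pow_mul_mem {k n : ℕ} (h : n ≤ k) (g : R2) : xx ^ k * g ∈ mIdeal ^ n :=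
  Ideal.mul_mem_right g _ (pow_mem_pow_of_le xx_mem h)

lemma smod_zero_iff {I : Ideal R2} {f : R2} :
    f ≡ 0 [SMOD (I • (⊤ : Submodule R2 R2))] ↔ f ∈ I := by
  rw [SModEq.zero, Ideal.smul_top_eq_map, Submodule.restrictScalars_mem,
    Algebra.algebraMap_self, Ideal.map_id]

lemma smod_sub_iff {I : Ideal R2} {f g : R2} :
    f ≡ g [SMOD (I • (⊤ : Submodule R2 R2))] ↔ f - g ∈ I := by
  rw [SModEq.sub_mem, Ideal.smul_top_eq_map, Submodule.restrictScalars_mem,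
    Algebra.algebraMap_self, Ideal.map_id]

instance R2hausdorff : IsHausdorff mIdeal R2 := by
  constructor
  intro f hf
  apply MvPowerSeries.ext
  intro d
  have := pow_le_V (deg d + 1) (smod_zero_iff.1 (hf (deg d + 1)))
  simpa using this d (by omega)

instance R2precomplete : IsPrecomplete mIdeal R2 := by
  constructor
  intro f hf
  refine ⟨fun d => coeff d (f (deg d + 1)), fun n => ?_⟩
  apply smod_sub_iff.2
  apply V_le_pow
  intro d hd
  have hmn := smod_sub_iff.1 (hf (show deg d + 1 ≤ n by omega))
  have hv : f (deg d + 1) - f n ∈ V (deg d + 1) := pow_le_V _ hmn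
  have h2 := hv d (by omega)
  rw [map_sub] at h2
  have hL : coeff d ((fun d => coeff d (f (deg d + 1))) : R2) = coeff d (f (deg d + 1)) := rfl
  exact (map_sub (coeff d) _ _).trans (show coeff d (f n) - coeff d (f (deg d + 1)) = 0 by
    linear_combination -h2)

instance R2adic : IsAdicComplete mIdeal R2 := ⟨⟩

end Aux

namespace Aux

open MvPowerSeries

/-! ### Substitution homomorphisms -/

def boxn (n : ℕ) : Fin 2 →₀ ℕ := Finsupp.single 0 n + Finsupp.single 1 n

lemma boxn_apply (n : ℕ) (i : Fin 2) : boxn n i = n := by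
  fin_cases i <;> simp [boxn, Finsupp.single_apply]

lemma deg_boxn (n : ℕ) : deg (boxn n) = n + n := by
  simp [deg, boxn_apply]

lemma lt_boxn_of_deg {d : Fin 2 →₀ ℕ} {n : ℕ} (h : deg d < n) : d < boxn n := by
  rw [lt_iff_le_and_ne]
  constructor
  · rw [Finsupp.le_def]
    intro i
    rw [boxn_apply]
    fin_cases i <;> simp [deg] at h ⊢ <;> omega
  · intro hd
    rw [hd, deg_boxn] at h
    omega

lemma le_deg_of_not_lt_boxn {d : Fin 2 →₀ ℕ} {n : ℕ} (h : ¬ d < boxn n) : n ≤ deg d := by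
  by_contra hc
  exact h (lt_boxn_of_deg (by omega))

lemma prod_mem_deg (v : Fin 2 → R2) (hv : ∀ i, v i ∈ mIdeal) (s : Fin 2 →₀ ℕ) :
    (s.prod fun i e => v i ^ e) ∈ mIdeal ^ (deg s) := by
  have : (s.prod fun i e => v i ^ e) = v 0 ^ s 0 * v 1 ^ s 1 := by
    rw [Finsupp.prod_fintype _ _ (fun i => pow_zero (v i))]
    exact Fin.prod_univ_two _
  rw [this, deg, pow_add]
  exact Ideal.mul_mem_mul (Ideal.pow_mem_pow (hv 0) _) (Ideal.pow_mem_pow (hv 1) _)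

lemma aeval_mem {A B : R2} (hA : A ∈ mIdeal) (hB : B ∈ mIdeal)
    {P : MvPolynomial (Fin 2) ℂ} {n : ℕ} (h : ∀ d ∈ P.support, n ≤ deg d) :
    MvPolynomial.aeval ![A, B] P ∈ mIdeal ^ n := by
  rw [P.as_sum, map_sum]
  apply Submodule.sum_mem
  intro d hd
  rw [MvPolynomial.aeval_monomial]
  apply Ideal.mul_mem_left
  have hv : ∀ i, (![A, B] : Fin 2 → R2) i ∈ mIdeal := by
    intro i; fin_cases i <;> simpa
  exact Ideal.pow_le_pow_right (h d hd) (prod_mem_deg _ hv d)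

def gn (A B : R2) (n : ℕ) (f : R2) : R2 :=
  MvPolynomial.aeval ![A, B] (trunc ℂ (boxn n) f)

lemma gn_add (A B : R2) (n : ℕ) (f g : R2) :
    gn A B n (f + g) = gn A B n f + gn A B n g := by
  simp [gn, map_add]

lemma gn_zero (A B : R2) (n : ℕ) : gn A B n 0 = 0 := by
  simp [gn, map_zero]

lemma gn_cauchy {A B : R2} (hA : A ∈ mIdeal) (hB : B ∈ mIdeal) {n N : ℕ} (h : n ≤ N) (f : R2) :
    gn A B N f - gn A B n f ∈ mIdeal ^ n := by
  rw [gn, gn, ← map_sub]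
  apply aeval_mem hA hB
  intro d hd
  rw [MvPolynomial.mem_support_iff, MvPolynomial.coeff_sub, coeff_trunc, coeff_trunc] at hd
  by_cases hlt : d < boxn n
  · have hlt2 : d < boxn N := lt_of_lt_of_le hlt (by rw [Finsupp.le_def]; intro i; rw [boxn_apply, boxn_apply]; exact h)
    rw [if_pos hlt, if_pos hlt2] at hd
    simp at hd
  · exact le_deg_of_not_lt_boxn hlt

lemma gn_mul {A B : R2} (hA : A ∈ mIdeal) (hB : B ∈ mIdeal) (n : ℕ) (f g : R2) :
    gn A B n (f * g) - gn A B n f * gn A B n g ∈ mIdeal ^ n := by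
  rw [gn, gn, gn, ← map_mul, ← map_sub]
  apply aeval_mem hA hB
  intro d hd
  apply le_deg_of_not_lt_boxn
  intro hlt
  rw [MvPolynomial.mem_support_iff] at hd
  apply hd
  rw [MvPolynomial.coeff_sub, coeff_trunc, if_pos hlt, MvPolynomial.coeff_mul, coeff_mul]
  rw [sub_eq_zero]
  apply Finset.sum_congr rfl
  rintro ⟨e, e'⟩ he
  rw [Finset.HasAntidiagonal.mem_antidiagonal] at he
  have he1 : e < boxn n := by
    apply lt_of_le_of_lt _ hlt
    exact le_of_le_of_eq le_self_add he
  have he2 : e' < boxn n := by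
    apply lt_of_le_of_lt _ hlt
    exact le_of_le_of_eq le_add_self he
  rw [coeff_trunc, coeff_trunc, if_pos he1, if_pos he2]

lemma boxn_ne_zero {n : ℕ} (hn : 1 ≤ n) : boxn n ≠ 0 := by
  intro h
  have := boxn_apply n 0
  rw [h] at this
  simp at this
  omega

lemma gn_C (A B : R2) {n : ℕ} (hn : 1 ≤ n) (c : ℂ) :
    gn A B n (C (σ := Fin 2) (R := ℂ) c) = C (σ := Fin 2) (R := ℂ) c := by
  rw [gn, trunc_C _ (boxn_ne_zero hn), MvPolynomial.aeval_C, c_eq_algebraMap]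

lemma gn_one (A B : R2) {n : ℕ} (hn : 1 ≤ n) : gn A B n 1 = 1 := by
  have := gn_C A B hn 1
  simpa using this

lemma gn_X (A B : R2) {n : ℕ} (hn : 2 ≤ n) (i : Fin 2) :
    gn A B n (X i) = ![A, B] i := by
  classical
  have htr : trunc ℂ (boxn n) (X i : R2) = MvPolynomial.X i := by
    apply MvPolynomial.ext
    intro d
    rw [coeff_trunc, MvPolynomial.coeff_X', MvPowerSeries.coeff_X]
    by_cases hd : d = Finsupp.single i 1
    · subst hd
      have hlt : Finsupp.single i 1 < boxn n := by
        apply lt_boxn_of_deg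
        fin_cases i <;> simp [deg, Finsupp.single_apply] <;> omega
      rw [if_pos hlt, if_pos rfl]
    · rw [if_neg (Ne.symm hd)]
      split_ifs with h1 <;> rfl
  rw [gn, htr, MvPolynomial.aeval_X]

end Aux

namespace Aux

open MvPowerSeries

lemma eq_of_sub_mem_all {a b : R2} (h : ∀ n, a - b ∈ mIdeal ^ n) : a = b := by
  have := R2hausdorff.haus (a - b) (fun n => smod_zero_iff.2 (h n))
  exact sub_eq_zero.1 this

lemma eq_of_sub_mem_ge {a b : R2} (k : ℕ) (h : ∀ n, k ≤ n → a - b ∈ mIdeal ^ n) : a = b := by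
  apply eq_of_sub_mem_all
  intro n
  exact Ideal.pow_le_pow_right (le_max_left n k) (h (max n k) (le_max_right n k))

section Phi

variable {A B : R2} (hA : A ∈ mIdeal) (hB : B ∈ mIdeal)

include hA hB

lemma exists_lim (f : R2) : ∃ L, ∀ n, gn A B n f - L ∈ mIdeal ^ n := by
  obtain ⟨L, hL⟩ := R2precomplete.prec (f := fun n => gn A B n f) (by
    intro a b hab
    rw [smod_sub_iff]
    have := gn_cauchy hA hB hab f
    have h2 : gn A B a f - gn A B b f = -(gn A B b f - gn A B a f) := by ring
    rw [h2]
    exact neg_mem this)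
  exact ⟨L, fun n => smod_sub_iff.1 (hL n)⟩

def Phi0 (f : R2) : R2 := Classical.choose (exists_lim hA hB f)

lemma Phi0_spec (f : R2) (n : ℕ) : gn A B n f - Phi0 hA hB f ∈ mIdeal ^ n :=
  Classical.choose_spec (exists_lim hA hB f) n

lemma Phi0_add (f g : R2) :
    Phi0 hA hB (f + g) = Phi0 hA hB f + Phi0 hA hB g := by
  apply eq_of_sub_mem_all
  intro n
  have h1 := Phi0_spec hA hB (f + g) n
  have h2 := Phi0_spec hA hB f n
  have h3 := Phi0_spec hA hB g n
  have : Phi0 hA hB (f + g) - (Phi0 hA hB f + Phi0 hA hB g) =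
      -(gn A B n (f + g) - Phi0 hA hB (f + g)) + (gn A B n f - Phi0 hA hB f)
        + (gn A B n g - Phi0 hA hB g) := by
    rw [gn_add]; ring
  rw [this]
  exact add_mem (add_mem (neg_mem h1) h2) h3

lemma Phi0_mul (f g : R2) :
    Phi0 hA hB (f * g) = Phi0 hA hB f * Phi0 hA hB g := by
  apply eq_of_sub_mem_all
  intro n
  have h1 := Phi0_spec hA hB (f * g) n
  have h2 := Phi0_spec hA hB f n
  have h3 := Phi0_spec hA hB g n
  have h4 := gn_mul hA hB n f g
  have : Phi0 hA hB (f * g) - Phi0 hA hB f * Phi0 hA hB g =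
      -(gn A B n (f * g) - Phi0 hA hB (f * g)) + (gn A B n (f * g) - gn A B n f * gn A B n g)
        + gn A B n f * (gn A B n g - Phi0 hA hB g)
        + (gn A B n f - Phi0 hA hB f) * Phi0 hA hB g := by ring
  rw [this]
  exact add_mem (add_mem (add_mem (neg_mem h1) h4) (Ideal.mul_mem_left _ _ h3))
    (Ideal.mul_mem_right _ _ h2)

lemma Phi0_C (c : ℂ) : Phi0 hA hB (C (σ := Fin 2) (R := ℂ) c) = C (σ := Fin 2) (R := ℂ) c := by
  apply eq_of_sub_mem_ge 1
  intro n hn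
  have h1 := Phi0_spec hA hB (C (σ := Fin 2) (R := ℂ) c) n
  rw [gn_C A B hn] at h1
  have : Phi0 hA hB (C (σ := Fin 2) (R := ℂ) c) - C (σ := Fin 2) (R := ℂ) c =
      -(C (σ := Fin 2) (R := ℂ) c - Phi0 hA hB (C (σ := Fin 2) (R := ℂ) c)) := by ring
  rw [this]
  exact neg_mem h1

lemma Phi0_one : Phi0 hA hB 1 = 1 := by
  have := Phi0_C hA hB 1
  simpa using this

lemma Phi0_zero : Phi0 hA hB 0 = 0 := by
  have := Phi0_C hA hB 0
  simpa using this

lemma Phi0_X (i : Fin 2) : Phi0 hA hB (X i) = ![A, B] i := by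
  apply eq_of_sub_mem_ge 2
  intro n hn
  have h1 := Phi0_spec hA hB (X i) n
  rw [gn_X A B hn] at h1
  have : Phi0 hA hB (X i) - ![A, B] i = -(![A, B] i - Phi0 hA hB (X i)) := by ring
  rw [this]
  exact neg_mem h1

/-- The substitution algebra homomorphism sending `xx ↦ A`, `yy ↦ B`. -/
def Phi : R2 →ₐ[ℂ] R2 where
  toFun := Phi0 hA hB
  map_one' := Phi0_one hA hB
  map_mul' := Phi0_mul hA hB
  map_zero' := Phi0_zero hA hB
  map_add' := Phi0_add hA hB
  commutes' := by
    intro c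
    rw [← c_eq_algebraMap]
    exact Phi0_C hA hB c

lemma Phi_xx : Phi hA hB xx = A := by
  have := Phi0_X hA hB 0
  simpa [Phi, xx] using this

lemma Phi_yy : Phi hA hB yy = B := by
  have := Phi0_X hA hB 1
  simpa [Phi, yy] using this

end Phi

/-! ### Abstract continuity and uniqueness -/

lemma map_m_le {Ψ : R2 →ₐ[ℂ] R2} (hx : Ψ xx ∈ mIdeal) (hy : Ψ yy ∈ mIdeal) {n : ℕ}
    {f : R2} (hf : f ∈ mIdeal ^ n) : Ψ f ∈ mIdeal ^ n := by
  have h1 : Ideal.map (Ψ : R2 →+* R2) (mIdeal ^ n) ≤ mIdeal ^ n := by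
    rw [Ideal.map_pow]
    apply Ideal.pow_right_mono
    rw [mIdeal, Ideal.map_span]
    rw [Ideal.span_le]
    rintro g hg
    simp only [Set.image_insert_eq, Set.image_singleton, Set.mem_insert_iff,
      Set.mem_singleton_iff] at hg
    rcases hg with rfl | rfl
    · exact hx
    · exact hy
  exact h1 (Ideal.mem_map_of_mem _ hf)

end Aux

namespace Aux

open MvPowerSeries

lemma mul_mem_sq {f g : R2} (hf : f ∈ mIdeal) (hg : g ∈ mIdeal) : f * g ∈ mIdeal ^ 2 := by
  rw [pow_two]
  exact Ideal.mul_mem_mul hf hg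

lemma sub_C_mem (f : R2) : f - C (σ := Fin 2) (R := ℂ) (constantCoeff (σ := Fin 2) (R := ℂ) f) ∈ mIdeal := by
  rw [mem_m_iff, map_sub, constantCoeff_C, sub_self]

section Unipotent

variable {Ψ : R2 →ₐ[ℂ] R2}

lemma psi_sub_mem_m (hx : Ψ xx ∈ mIdeal) (hy : Ψ yy ∈ mIdeal) (f : R2) :
    Ψ f - f ∈ mIdeal := by
  set c := constantCoeff (σ := Fin 2) (R := ℂ) f
  have h1 : f - C (σ := Fin 2) (R := ℂ) c ∈ mIdeal := sub_C_mem f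
  have h2 : Ψ (f - C (σ := Fin 2) (R := ℂ) c) ∈ mIdeal := by
    have := map_m_le hx hy (n := 1) (by rwa [pow_one])
    rwa [pow_one] at this
  have hC : Ψ (C (σ := Fin 2) (R := ℂ) c) = C (σ := Fin 2) (R := ℂ) c := by
    rw [c_eq_algebraMap]
    exact Ψ.commutes c
  have : Ψ f - f = Ψ (f - C (σ := Fin 2) (R := ℂ) c) - (f - C (σ := Fin 2) (R := ℂ) c) := by
    rw [map_sub, hC]; ring
  rw [this]
  exact sub_mem h2 h1

variable (hx : Ψ xx - xx ∈ mIdeal ^ 2) (hy : Ψ yy - yy ∈ mIdeal ^ 2)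

set_option linter.unusedSectionVars false

include hx hy

lemma psi_xx_mem : Ψ xx ∈ mIdeal := by
  have : Ψ xx = (Ψ xx - xx) + xx := by ring
  rw [this]
  exact add_mem (Ideal.pow_le_self (by norm_num) hx) xx_mem

lemma psi_yy_mem : Ψ yy ∈ mIdeal := by
  have : Ψ yy = (Ψ yy - yy) + yy := by ring
  rw [this]
  exact add_mem (Ideal.pow_le_self (by norm_num) hy) yy_mem

lemma psi_sub_mem_sq {f : R2} (hf : f ∈ mIdeal) : Ψ f - f ∈ mIdeal ^ 2 := by
  obtain ⟨p, q, hpq⟩ := Ideal.mem_span_pair.1 (by rwa [mIdeal] at hf)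
  have hx' := psi_xx_mem hx hy
  have hy' := psi_yy_mem hx hy
  have : Ψ f - f = Ψ p * (Ψ xx - xx) + (Ψ p - p) * xx
      + Ψ q * (Ψ yy - yy) + (Ψ q - q) * yy := by
    rw [← hpq, map_add, map_mul, map_mul]; ring
  rw [this]
  refine add_mem (add_mem (add_mem ?_ ?_) ?_) ?_
  · exact Ideal.mul_mem_left _ _ hx
  · exact mul_mem_sq (psi_sub_mem_m hx' hy' p) xx_mem
  · exact Ideal.mul_mem_left _ _ hy
  · exact mul_mem_sq (psi_sub_mem_m hx' hy' q) yy_mem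

lemma psi_sub_mem_succ : ∀ n, ∀ f ∈ mIdeal ^ n, Ψ f - f ∈ mIdeal ^ (n + 1) := by
  have hx' := psi_xx_mem hx hy
  have hy' := psi_yy_mem hx hy
  intro n
  induction n with
  | zero =>
    intro f _
    rw [pow_one]
    exact psi_sub_mem_m hx' hy' f
  | succ n ih =>
    intro f hf
    rw [pow_succ] at hf
    refine Submodule.mul_induction_on hf ?_ ?_
    · intro a ha b hb
      have h1 : Ψ (a * b) - a * b = Ψ a * (Ψ b - b) + (Ψ a - a) * b := by
        rw [map_mul]; ring
      rw [h1]
      refine add_mem ?_ ?_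
      · have hm : Ψ a * (Ψ b - b) ∈ mIdeal ^ n * mIdeal ^ 2 :=
          Ideal.mul_mem_mul (map_m_le hx' hy' ha) (psi_sub_mem_sq hx hy hb)
        rw [← pow_add] at hm
        exact hm
      · have hm : (Ψ a - a) * b ∈ mIdeal ^ (n + 1) * mIdeal :=
          Ideal.mul_mem_mul (ih a ha) hb
        rw [← pow_succ] at hm
        exact hm
    · intro a b ha hb
      have : Ψ (a + b) - (a + b) = (Ψ a - a) + (Ψ b - b) := by
        rw [map_add]; ring
      rw [this]
      exact add_mem ha hb

lemma lim_of_cauchy (F : ℕ → R2) (h : ∀ a b : ℕ, a ≤ b → F b - F a ∈ mIdeal ^ a) :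
    ∃ L, ∀ n, F n - L ∈ mIdeal ^ n := by
  obtain ⟨L, hL⟩ := R2precomplete.prec (f := F) (by
    intro a b hab
    rw [smod_sub_iff]
    have := h a b hab
    have h2 : F a - F b = -(F b - F a) := by ring
    rw [h2]
    exact neg_mem this)
  exact ⟨L, fun n => smod_sub_iff.1 (hL n)⟩

lemma psi_surjective : Function.Surjective Ψ := by
  have hx' := psi_xx_mem hx hy
  have hy' := psi_yy_mem hx hy
  intro g
  set F : ℕ → R2 := fun n => Nat.rec 0 (fun _ Fn => Fn + (g - Ψ Fn)) n with hF
  have hFsucc : ∀ n, F (n + 1) = F n + (g - Ψ (F n)) := fun n => rfl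
  have hinv : ∀ n, g - Ψ (F n) ∈ mIdeal ^ n := by
    intro n
    induction n with
    | zero => simp
    | succ n ih =>
      have : g - Ψ (F (n + 1)) = -(Ψ (g - Ψ (F n)) - (g - Ψ (F n))) := by
        rw [hFsucc, map_add, map_sub]; ring
      rw [this]
      exact neg_mem (psi_sub_mem_succ hx hy n _ ih)
  have hcauchy : ∀ a b : ℕ, a ≤ b → F b - F a ∈ mIdeal ^ a := by
    intro a b hab
    induction b, hab using Nat.le_induction with
    | base => simp
    | succ b hab ih =>
      have : F (b + 1) - F a = (g - Ψ (F b)) + (F b - F a) := by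
        rw [hFsucc]; ring
      rw [this]
      exact add_mem (Ideal.pow_le_pow_right hab (hinv b)) ih
  obtain ⟨L, hL⟩ := lim_of_cauchy (hx := hx) (hy := hy) F hcauchy
  refine ⟨L, ?_⟩
  apply eq_of_sub_mem_all
  intro n
  have h1 : Ψ L - g = Ψ (L - F n) + (Ψ (F n) - g) := by rw [map_sub]; ring
  rw [h1]
  refine add_mem ?_ ?_
  · have : L - F n = -(F n - L) := by ring
    rw [this]
    exact map_m_le hx' hy' (neg_mem (hL n))
  · have : Ψ (F n) - g = -(g - Ψ (F n)) := by ring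
    rw [this]
    exact neg_mem (hinv n)

lemma psi_injective : Function.Injective Ψ := by
  have key : ∀ f : R2, Ψ f = 0 → f = 0 := by
    intro f hf
    have : ∀ n, f ∈ mIdeal ^ n := by
      intro n
      induction n with
      | zero => simp
      | succ n ih =>
        have : f = -(Ψ f - f) := by rw [hf]; ring
        rw [this]
        exact neg_mem (psi_sub_mem_succ hx hy n f ih)
    apply eq_of_sub_mem_all (b := 0)
    intro n
    rw [sub_zero]
    exact this n
  intro a b hab
  have : Ψ (a - b) = 0 := by rw [map_sub, hab, sub_self]
  have := key _ this
  exact sub_eq_zero.1 this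

end Unipotent

end Aux

namespace Aux

open MvPowerSeries

section Resc

/-- rescaling map as a raw function -/
def rescFun (l mu : ℂ) (f : R2) : R2 := fun d => l ^ (d 0) * mu ^ (d 1) * f d

lemma coeff_rescFun (l mu : ℂ) (f : R2) (d : Fin 2 →₀ ℕ) :
    coeff d (rescFun l mu f) = l ^ (d 0) * mu ^ (d 1) * coeff d f := rfl

lemma rescFun_mul (l mu : ℂ) (f g : R2) :
    rescFun l mu (f * g) = rescFun l mu f * rescFun l mu g := by
  apply MvPowerSeries.ext
  intro d
  rw [coeff_rescFun, coeff_mul, coeff_mul, Finset.mul_sum]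
  apply Finset.sum_congr rfl
  rintro ⟨e, e'⟩ he
  rw [Finset.HasAntidiagonal.mem_antidiagonal] at he
  rw [coeff_rescFun, coeff_rescFun]
  have h0 : d 0 = e 0 + e' 0 := by rw [← he]; rfl
  have h1 : d 1 = e 1 + e' 1 := by rw [← he]; rfl
  rw [h0, h1, pow_add, pow_add]
  ring

lemma rescFun_comp (l mu l' mu' : ℂ) (f : R2) :
    rescFun l mu (rescFun l' mu' f) = rescFun (l * l') (mu * mu') f := by
  apply MvPowerSeries.ext
  intro d
  rw [coeff_rescFun, coeff_rescFun, coeff_rescFun, mul_pow, mul_pow]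
  ring

lemma rescFun_one_one (f : R2) : rescFun 1 1 f = f := by
  apply MvPowerSeries.ext
  intro d
  rw [coeff_rescFun]
  simp

/-- rescaling as an algebra equivalence -/
def resc (l mu : ℂ) (hl : l ≠ 0) (hmu : mu ≠ 0) : R2 ≃ₐ[ℂ] R2 where
  toFun := rescFun l mu
  invFun := rescFun l⁻¹ mu⁻¹
  left_inv := fun f => by
    rw [rescFun_comp, inv_mul_cancel₀ hl, inv_mul_cancel₀ hmu, rescFun_one_one]
  right_inv := fun f => by
    rw [rescFun_comp, mul_inv_cancel₀ hl, mul_inv_cancel₀ hmu, rescFun_one_one]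
  map_mul' := rescFun_mul l mu
  map_add' := fun f g => by
    apply MvPowerSeries.ext
    intro d
    rw [map_add, coeff_rescFun, map_add, coeff_rescFun, coeff_rescFun]
    ring
  commutes' := fun c => by
    apply MvPowerSeries.ext
    intro d
    rw [← c_eq_algebraMap, coeff_rescFun]
    classical
    rw [coeff_C]
    split_ifs with h
    · rw [h]; simp
    · ring

lemma resc_X (l mu : ℂ) (hl : l ≠ 0) (hmu : mu ≠ 0) (i : Fin 2) :
    resc l mu hl hmu (X i) = C (σ := Fin 2) (R := ℂ) (![l, mu] i) * X i := by
  apply MvPowerSeries.ext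
  intro d
  have : coeff d (resc l mu hl hmu (X i)) = l ^ (d 0) * mu ^ (d 1) * coeff d (X i) :=
    coeff_rescFun l mu _ d
  rw [this, coeff_C_mul]
  classical
  rw [MvPowerSeries.coeff_X]
  split_ifs with h
  · rw [h]
    fin_cases i <;> simp [Finsupp.single_apply]
  · ring

lemma resc_xx (l mu : ℂ) (hl : l ≠ 0) (hmu : mu ≠ 0) :
    resc l mu hl hmu xx = C (σ := Fin 2) (R := ℂ) l * xx := by
  have := resc_X l mu hl hmu 0
  simpa [xx] using this

lemma resc_yy (l mu : ℂ) (hl : l ≠ 0) (hmu : mu ≠ 0) :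
    resc l mu hl hmu yy = C (σ := Fin 2) (R := ℂ) mu * yy := by
  have := resc_X l mu hl hmu 1
  simpa [yy] using this

lemma C_mul_mem {c : ℂ} {f : R2} (hf : f ∈ mIdeal) : C (σ := Fin 2) (R := ℂ) c * f ∈ mIdeal :=
  Ideal.mul_mem_left _ _ hf

lemma algHom_C (Ψ : R2 →ₐ[ℂ] R2) (c : ℂ) : Ψ (C (σ := Fin 2) (R := ℂ) c) = C (σ := Fin 2) (R := ℂ) c := by
  rw [c_eq_algebraMap]
  exact Ψ.commutes c

/-- Generalized bijectivity: an algebra endomorphism whose linear part is an invertible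
diagonal map is bijective. -/
lemma psi_bijective_of_linear {Ψ : R2 →ₐ[ℂ] R2} (l mu : ℂ) (hl : l ≠ 0) (hmu : mu ≠ 0)
    (hx : Ψ xx - C (σ := Fin 2) (R := ℂ) l * xx ∈ mIdeal ^ 2)
    (hy : Ψ yy - C (σ := Fin 2) (R := ℂ) mu * yy ∈ mIdeal ^ 2) :
    Function.Bijective Ψ := by
  set E := resc l mu hl hmu with hE
  set Θ : R2 →ₐ[ℂ] R2 := (E.symm.toAlgHom).comp Ψ with hTheta
  have hEsymm_x : E.symm xx = C (σ := Fin 2) (R := ℂ) l⁻¹ * xx := by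
    rw [← resc_xx l⁻¹ mu⁻¹ (inv_ne_zero hl) (inv_ne_zero hmu)]
    rfl
  have hEsymm_y : E.symm yy = C (σ := Fin 2) (R := ℂ) mu⁻¹ * yy := by
    rw [← resc_yy l⁻¹ mu⁻¹ (inv_ne_zero hl) (inv_ne_zero hmu)]
    rfl
  have hEsymm_m : ∀ {k : ℕ} {f : R2}, f ∈ mIdeal ^ k → E.symm f ∈ mIdeal ^ k := by
    intro k f hf
    refine map_m_le (Ψ := E.symm.toAlgHom) ?_ ?_ hf
    · show E.symm xx ∈ mIdeal
      rw [hEsymm_x]; exact C_mul_mem xx_mem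
    · show E.symm yy ∈ mIdeal
      rw [hEsymm_y]; exact C_mul_mem yy_mem
  have hsymmC : ∀ c : ℂ, E.symm (C (σ := Fin 2) (R := ℂ) c) = C (σ := Fin 2) (R := ℂ) c := by
    intro c
    rw [c_eq_algebraMap]
    exact E.symm.commutes c
  have h2x : E.symm (C (σ := Fin 2) (R := ℂ) l * xx) = xx := by
    rw [map_mul, hsymmC l, hEsymm_x, ← mul_assoc, ← map_mul,
      mul_inv_cancel₀ hl, map_one, one_mul]
  have h2y : E.symm (C (σ := Fin 2) (R := ℂ) mu * yy) = yy := by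
    rw [map_mul, hsymmC mu, hEsymm_y, ← mul_assoc, ← map_mul,
      mul_inv_cancel₀ hmu, map_one, one_mul]
  have hTx : Θ xx - xx ∈ mIdeal ^ 2 := by
    have h3 : Θ xx - xx = E.symm (Ψ xx - C (σ := Fin 2) (R := ℂ) l * xx) := by
      show E.symm (Ψ xx) - xx = _
      rw [map_sub, h2x]
    rw [h3]
    exact hEsymm_m hx
  have hTy : Θ yy - yy ∈ mIdeal ^ 2 := by
    have h3 : Θ yy - yy = E.symm (Ψ yy - C (σ := Fin 2) (R := ℂ) mu * yy) := by
      show E.symm (Ψ yy) - yy = _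
      rw [map_sub, h2y]
    rw [h3]
    exact hEsymm_m hy
  have hTbij : Function.Bijective Θ := ⟨psi_injective hTx hTy, psi_surjective hTx hTy⟩
  have hcomp : ∀ f, Ψ f = E (Θ f) := fun f => (E.apply_symm_apply (Ψ f)).symm
  have : Function.Bijective (fun f => E (Θ f)) := E.bijective.comp hTbij
  have hfun : (fun f => E (Θ f)) = ⇑Ψ := by
    funext f
    rw [← hcomp]
  rwa [hfun] at this

end Resc

end Aux

namespace Aux

open MvPowerSeries Polynomial

local notation "PX" => Polynomial.X (R := R2)

lemma hensel (f : Polynomial R2) (hf : f.Monic) (a₀ : R2) (h1 : f.eval a₀ ∈ mIdeal)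
    (h2 : IsUnit (Ideal.Quotient.mk mIdeal (f.derivative.eval a₀))) :
    ∃ a, f.IsRoot a ∧ a - a₀ ∈ mIdeal :=
  HenselianRing.is_henselian f hf a₀ h1 h2

lemma isUnit_mk {u : R2} (h : constantCoeff (σ := Fin 2) (R := ℂ) u ≠ 0) :
    IsUnit (Ideal.Quotient.mk mIdeal u) :=
  (MvPowerSeries.isUnit_iff_constantCoeff.2 (isUnit_iff_ne_zero.2 h)).map _

lemma xx_pow_mem {k : ℕ} (h : 1 ≤ k) : xx ^ k ∈ mIdeal := by
  have := pow_mem_pow_of_le xx_mem h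
  rwa [pow_one] at this

lemma cc_xx_pow {k : ℕ} (h : 1 ≤ k) : constantCoeff (σ := Fin 2) (R := ℂ) (xx ^ k) = 0 :=
  mem_m_iff.1 (xx_pow_mem h)

/-- The root δ with δ(1-δ)² = x^(2m-6). -/
lemma exists_delta (k : ℕ) (hk : 1 ≤ k) :
    ∃ δ : R2, δ ∈ mIdeal ∧ δ * (1 - δ) ^ 2 = xx ^ k := by
  set f : Polynomial R2 := PX ^ 3 + PX ^ 2 - Polynomial.C (xx ^ k) with hf
  have hmonic : f.Monic := by
    have h2 : (PX ^ 2 - Polynomial.C (xx ^ k) : Polynomial R2).degree < 3 := by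
      apply lt_of_le_of_lt (degree_sub_le _ _)
      rw [degree_X_pow]
      refine max_lt (by norm_num) (lt_of_le_of_lt degree_C_le (by norm_num))
    have := Polynomial.monic_X_pow_add (n := 3) (p := PX ^ 2 - Polynomial.C (xx ^ k)) h2
    rwa [hf, add_sub_assoc]
  have heval : f.eval (-1) ∈ mIdeal := by
    have : f.eval (-1) = -(xx ^ k) := by simp [hf]; ring
    rw [this]
    exact neg_mem (xx_pow_mem hk)
  have hderiv : IsUnit (Ideal.Quotient.mk mIdeal (f.derivative.eval (-1))) := by
    have : f.derivative.eval (-1) = 1 := by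
      rw [hf]
      simp only [derivative_sub, derivative_add, derivative_X_pow, derivative_C, sub_zero,
        eval_add, eval_mul, eval_pow, eval_X, eval_natCast, eval_C]
      norm_num
    rw [this, map_one]
    exact isUnit_one
  obtain ⟨w, hw, hwm⟩ := hensel f hmonic (-1) heval hderiv
  refine ⟨w + 1, by simpa using hwm, ?_⟩
  have hr : w ^ 3 + w ^ 2 - xx ^ k = 0 := by
    have := hw
    simpa [hf, Polynomial.IsRoot] using this
  linear_combination hr

end Aux

namespace Aux

open MvPowerSeries Polynomial

local notation "PX" => Polynomial.X (R := R2)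
local notation "CC" => MvPowerSeries.C (σ := Fin 2) (R := ℂ)
local notation "cc" => MvPowerSeries.constantCoeff (σ := Fin 2) (R := ℂ)

lemma exists_root_pow (n : ℕ) (hn : 1 ≤ n) (q : R2) (a₀ : ℂ)
    (ha : a₀ ^ n = cc q) (hd : (n : ℂ) * a₀ ^ (n - 1) ≠ 0) :
    ∃ r : R2, r ^ n = q ∧ r - CC a₀ ∈ mIdeal := by
  set f : Polynomial R2 := PX ^ n - Polynomial.C q with hf
  have hmonic : f.Monic := monic_X_pow_sub_C q (by omega)
  have heval : f.eval (CC a₀) ∈ mIdeal := by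
    rw [mem_m_iff]
    simp only [hf, eval_sub, eval_pow, eval_X, eval_C, map_sub, map_pow, constantCoeff_C]
    rw [ha, sub_self]
  have hderiv : IsUnit (Ideal.Quotient.mk mIdeal (f.derivative.eval (CC a₀))) := by
    apply isUnit_mk
    rw [hf]
    simp only [derivative_sub, derivative_X_pow, derivative_C, sub_zero, eval_mul, eval_pow,
      eval_X, eval_natCast, map_mul, map_pow, map_natCast, constantCoeff_C]
    exact hd
  obtain ⟨r, hr, hrm⟩ := hensel f hmonic (CC a₀) heval hderiv
  refine ⟨r, ?_, hrm⟩
  have : r ^ n - q = 0 := by simpa [hf, Polynomial.IsRoot] using hr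
  linear_combination this

end Aux

namespace Aux

open MvPowerSeries

local notation "CC" => MvPowerSeries.C (σ := Fin 2) (R := ℂ)
local notation "cc" => MvPowerSeries.constantCoeff (σ := Fin 2) (R := ℂ)

lemma smooth_yy_add {g : R2} (hg : g ∈ mIdeal ^ 2) : IsSmoothGerm (yy + g) := by
  constructor
  · exact add_mem yy_mem (Ideal.pow_le_self (by norm_num) hg)
  · intro hmem
    have hV := pow_le_V 2 hmem
    have h1 := hV (Finsupp.single 1 1) (by simp [deg, Finsupp.single_apply])
    have h2 := pow_le_V 2 hg (Finsupp.single 1 1) (by simp [deg, Finsupp.single_apply])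
    rw [map_add, h2, add_zero, yy, MvPowerSeries.coeff_X, if_pos rfl] at h1
    exact one_ne_zero h1

end Aux



open MvPowerSeries Aux

/-- The germ `C_{3,2m} : y³ + y²x² - x^{2m} = 0` at the origin, for `m ≥ 4`,
has exactly three smooth branches `L₁ : y + x² + (higher) = 0` and
`L₂, L₃ : y ± x^{m-1} + (higher) = 0`; moreover `(L₂ ∪ L₃, O)` is an
`A_{2m-3}` singularity and `(L₁ ∪ L₂, O)` is an `A_3` singularity. -/
theorem C3_2m_branches (m : ℕ) (hm : 4 ≤ m) :
    ∃ u L₁ L₂ L₃ : R2, IsUnit u ∧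
      yy ^ 3 + yy ^ 2 * xx ^ 2 - xx ^ (2 * m) = u * L₁ * L₂ * L₃ ∧
      IsSmoothGerm L₁ ∧ IsSmoothGerm L₂ ∧ IsSmoothGerm L₃ ∧
      (∃ h ∈ mIdeal ^ 3, L₁ = yy + xx ^ 2 + h) ∧
      (∃ h ∈ mIdeal ^ m, L₂ = yy + xx ^ (m - 1) + h) ∧
      (∃ h ∈ mIdeal ^ m, L₃ = yy - xx ^ (m - 1) + h) ∧
      AnalyticEquiv (L₂ * L₃) (yy ^ 2 - xx ^ (2 * m - 2)) ∧
      AnalyticEquiv (L₁ * L₂) (yy ^ 2 - xx ^ 4) := by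
  classical
  set CCh : R2 := MvPowerSeries.C (σ := Fin 2) (R := ℂ) (1/2) with hCCh
  -- δ
  obtain ⟨δ, hδm, hδrel⟩ := Aux.exists_delta (2*m-6) (by omega)
  have hccδ : MvPowerSeries.constantCoeff (σ := Fin 2) (R := ℂ) δ = 0 := Aux.mem_m_iff.1 hδm
  have hUv : IsUnit (1 - δ) := by
    rw [MvPowerSeries.isUnit_iff_constantCoeff, map_sub, map_one, hccδ, sub_zero]
    exact isUnit_one
  obtain ⟨Uv, hUvval⟩ := hUv
  set iv : R2 := ↑Uv⁻¹ with hivdef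
  have hiv : iv * (1 - δ) = 1 := by rw [hivdef, ← hUvval]; exact Units.inv_mul _
  have hδeq : δ = xx^(2*m-6) * (iv*iv) := by
    linear_combination (iv*iv) * hδrel - δ*(1 + iv*(1-δ)) * hiv
  have hx2δ : xx^2*δ = xx^(2*m-4) * (iv*iv) := by
    rw [hδeq, ← mul_assoc, ← pow_add]
    congr 2
    omega
  have hcciv : MvPowerSeries.constantCoeff (σ := Fin 2) (R := ℂ) iv = 1 := by
    have h := congrArg (MvPowerSeries.constantCoeff (σ := Fin 2) (R := ℂ)) hiv
    simp only [map_mul, map_sub, map_one, hccδ, sub_zero, mul_one] at h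
    exact h
  -- t
  have h14 : MvPowerSeries.C (σ := Fin 2) (R := ℂ) (1/4) * 4 = 1 := by
    rw [← map_ofNat (MvPowerSeries.C (σ := Fin 2) (R := ℂ)) 4, ← map_mul,
      show (1/4 * 4 : ℂ) = 1 by norm_num, map_one]
  set q : R2 := MvPowerSeries.C (σ := Fin 2) (R := ℂ) (1/4) * ((4:R2) - 3*δ) * (iv*iv) with hqdef
  have hccq : MvPowerSeries.constantCoeff (σ := Fin 2) (R := ℂ) q = 1 := by
    simp only [hqdef, map_mul, map_sub, map_ofNat, hccδ, hcciv, constantCoeff_C]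
    norm_num
  obtain ⟨t, ht2, htm1⟩ := Aux.exists_root_pow 2 (by norm_num) q 1 (by rw [one_pow, hccq])
    (by norm_num)
  have htm : t - 1 ∈ mIdeal := by
    rwa [map_one] at htm1
  have hcct : MvPowerSeries.constantCoeff (σ := Fin 2) (R := ℂ) t = 1 := by
    have := Aux.mem_m_iff.1 htm
    rw [map_sub, map_one] at this
    linear_combination this
  have rel2 : 4*t^2*(1-δ)^2 = 4 - 3*δ := by
    linear_combination (4*(1-δ)^2) * ht2 + ((4:R2)-3*δ)*(iv*(1-δ))^2 * h14
      + ((4:R2)-3*δ)*(iv*(1-δ)+1) * hiv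
  -- basic constants
  have hh : CCh + CCh = 1 := by
    rw [hCCh, ← map_add, show (1/2 + 1/2 : ℂ) = 1 by norm_num, map_one]
  have hh4 : CCh*CCh*4 = 1 := by
    rw [hCCh, ← map_mul, show (1/2 * (1/2) : ℂ) = 1/4 by norm_num]
    exact h14
  set M : R2 := xx^(m-1) with hMdef
  have RM : M^2 = xx^4 * xx^(2*m-6) := by
    rw [hMdef, ← pow_mul, ← pow_add]
    congr 1
    omega
  have RX : xx^(2*m) = xx^6 * xx^(2*m-6) := by
    rw [← pow_add]
    congr 1
    omega
  -- memberships
  have hx2δ_mem : ∀ k : ℕ, k ≤ 2*m-4 → xx^2*δ ∈ mIdeal ^ k := by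
    intro k hk
    rw [hx2δ]
    exact Aux.xx_pow_mul_mem hk _
  have hx2δ_m : xx^2*δ ∈ mIdeal := by
    have := hx2δ_mem 1 (by omega)
    rwa [pow_one] at this
  have hM_mem : ∀ k : ℕ, k ≤ m-1 → M ∈ mIdeal ^ k := by
    intro k hk
    rw [hMdef]
    exact Aux.pow_mem_pow_of_le Aux.xx_mem hk
  have hM_m : M ∈ mIdeal := by
    have := hM_mem 1 (by omega)
    rwa [pow_one] at this
  -- c (root for the first equivalence)
  obtain ⟨cr, hcr, hcrm1⟩ := Aux.exists_root_pow (2*m-2) (by omega) (t^2) 1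
    (by rw [one_pow, map_pow, hcct, one_pow])
    (by
      have h1 : ((2*m-2 : ℕ) : ℂ) ≠ 0 := Nat.cast_ne_zero.2 (by omega)
      simpa using h1)
  have hcrm : cr - 1 ∈ mIdeal := by rwa [map_one] at hcrm1
  -- W and e (root for the second equivalence)
  set W : R2 := 1 - MvPowerSeries.C (σ := Fin 2) (R := ℂ) (3/2)*δ - xx^(m-3)*t with hWdef
  have hccW : MvPowerSeries.constantCoeff (σ := Fin 2) (R := ℂ) W = 1 := by
    simp only [hWdef, map_sub, map_mul, map_one, constantCoeff_C, hccδ,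
      Aux.cc_xx_pow (show 1 ≤ m-3 by omega), mul_zero, zero_mul, sub_zero]
  obtain ⟨e₀, he₀⟩ := IsAlgClosed.exists_pow_nat_eq (1/4 : ℂ) (n := 4) (by norm_num)
  have he₀ne : e₀ ≠ 0 := by
    intro h
    rw [h] at he₀
    norm_num at he₀
  obtain ⟨er, her, herm⟩ := Aux.exists_root_pow 4 (by norm_num)
    (MvPowerSeries.C (σ := Fin 2) (R := ℂ) (1/4) * W^2) e₀
    (by rw [map_mul, map_pow, hccW, one_pow, constantCoeff_C, mul_one, he₀])
    (by
      simp only [Nat.cast_ofNat]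
      exact mul_ne_zero (by norm_num) (pow_ne_zero _ he₀ne))
  -- branches
  refine ⟨1, yy + xx^2 - xx^2*δ, yy + CCh*(xx^2*δ) + M*t, yy + CCh*(xx^2*δ) - M*t,
    isUnit_one, ?fact, ?s1, ?s2, ?s3, ?h1, ?h2, ?h3, ?e1, ?e2⟩
  case fact =>
    linear_combination (-1 : R2)*RX + ((yy + xx^2 - xx^2*δ)*t^2)*RM
      + (xx^6 - (yy + xx^2 - xx^2*δ)*xx^4*t^2)*hδrel
      + (CCh*CCh*(yy + xx^2 - xx^2*δ)*xx^4*δ)*rel2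
      + ((yy + xx^2 - xx^2*δ)*xx^4*δ*(1-δ) - (yy + xx^2 - xx^2*δ)*xx^4*δ*t^2*(1-δ)^2)*hh4
      + (-((yy + xx^2 - xx^2*δ)*xx^2*δ*yy))*hh
  case s1 =>
    have heq : yy + xx^2 - xx^2*δ = yy + (xx^2 - xx^2*δ) := by ring
    rw [heq]
    apply Aux.smooth_yy_add
    exact sub_mem (Ideal.pow_mem_pow Aux.xx_mem 2) (hx2δ_mem 2 (by omega))
  case s2 =>
    have heq : yy + CCh*(xx^2*δ) + M*t = yy + (CCh*(xx^2*δ) + M*t) := by ring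
    rw [heq]
    apply Aux.smooth_yy_add
    exact add_mem (Ideal.mul_mem_left _ _ (hx2δ_mem 2 (by omega)))
      (Ideal.mul_mem_right _ _ (hM_mem 2 (by omega)))
  case s3 =>
    have heq : yy + CCh*(xx^2*δ) - M*t = yy + (CCh*(xx^2*δ) - M*t) := by ring
    rw [heq]
    apply Aux.smooth_yy_add
    exact sub_mem (Ideal.mul_mem_left _ _ (hx2δ_mem 2 (by omega)))
      (Ideal.mul_mem_right _ _ (hM_mem 2 (by omega)))
  case h1 =>
    refine ⟨-(xx^2*δ), neg_mem (hx2δ_mem 3 (by omega)), by ring⟩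
  case h2 =>
    refine ⟨CCh*(xx^2*δ) + M*(t-1), ?_, by rw [hMdef]; ring⟩
    refine add_mem (Ideal.mul_mem_left _ _ (hx2δ_mem m (by omega))) ?_
    have h1 : M*(t-1) ∈ mIdeal ^ (m-1) * mIdeal :=
      Ideal.mul_mem_mul (hM_mem (m-1) le_rfl) htm
    rwa [← pow_succ, show m - 1 + 1 = m by omega] at h1
  case h3 =>
    refine ⟨CCh*(xx^2*δ) - M*(t-1), ?_, by rw [hMdef]; ring⟩
    refine sub_mem (Ideal.mul_mem_left _ _ (hx2δ_mem m (by omega))) ?_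
    have h1 : M*(t-1) ∈ mIdeal ^ (m-1) * mIdeal :=
      Ideal.mul_mem_mul (hM_mem (m-1) le_rfl) htm
    rwa [← pow_succ, show m - 1 + 1 = m by omega] at h1
  case e1 =>
    -- (L₂ ∪ L₃) is A_{2m-3}
    have hA : xx * cr ∈ mIdeal := Ideal.mul_mem_right _ _ Aux.xx_mem
    have hB : yy + CCh*(xx^2*δ) ∈ mIdeal :=
      add_mem Aux.yy_mem (Ideal.mul_mem_left _ _ hx2δ_m)
    set Φ := Aux.Phi hA hB with hΦdef
    have hbij : Function.Bijective Φ := by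
      apply Aux.psi_bijective_of_linear 1 1 one_ne_zero one_ne_zero
      · have hx : Φ xx = xx * cr := Aux.Phi_xx hA hB
        rw [hx, map_one, one_mul]
        have : xx * cr - xx = xx * (cr - 1) := by ring
        rw [this]
        exact Aux.mul_mem_sq Aux.xx_mem hcrm
      · have hy : Φ yy = yy + CCh*(xx^2*δ) := Aux.Phi_yy hA hB
        rw [hy, map_one, one_mul]
        have : yy + CCh*(xx^2*δ) - yy = CCh*(xx^2*δ) := by ring
        rw [this]
        exact Ideal.mul_mem_left _ _ (hx2δ_mem 2 (by omega))
    refine ⟨AlgEquiv.ofBijective Φ hbij, 1, isUnit_one, ?_⟩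
    rw [one_mul]
    have hval : (AlgEquiv.ofBijective Φ hbij) (yy ^ 2 - xx ^ (2*m-2))
        = (yy + CCh*(xx^2*δ))^2 - xx^(2*m-2) * t^2 := by
      show Φ (yy ^ 2 - xx ^ (2*m-2)) = _
      rw [map_sub, map_pow, map_pow, Aux.Phi_xx hA hB, Aux.Phi_yy hA hB, mul_pow, hcr]
    rw [hval]
    have hM2 : M^2 = xx^(2*m-2) := by
      rw [hMdef, ← pow_mul]
      congr 1
      omega
    linear_combination (-(t^2)) * hM2
  case e2 =>
    -- (L₁ ∪ L₂) is A_3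
    set α : R2 := xx^2 - xx^2*δ with hαdef
    set β : R2 := CCh*(xx^2*δ) + M*t with hβdef
    have hα_mem : α ∈ mIdeal ^ 2 :=
      sub_mem (Ideal.pow_mem_pow Aux.xx_mem 2) (hx2δ_mem 2 (by omega))
    have hβ_mem : β ∈ mIdeal ^ 2 :=
      add_mem (Ideal.mul_mem_left _ _ (hx2δ_mem 2 (by omega)))
        (Ideal.mul_mem_right _ _ (hM_mem 2 (by omega)))
    have hW2 : xx^2*W = α - β := by
      have hM' : M = xx^2*xx^(m-3) := by
        rw [hMdef, ← pow_add]
        congr 1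
        omega
      have hh32 : MvPowerSeries.C (σ := Fin 2) (R := ℂ) (3/2) = 1 + CCh := by
        rw [hCCh, show (3/2 : ℂ) = 1 + 1/2 by norm_num, map_add, map_one]
      rw [hWdef, hαdef, hβdef, hM', hh32]
      ring
    have hA : xx * er ∈ mIdeal := Ideal.mul_mem_right _ _ Aux.xx_mem
    have hB : yy + CCh*(α + β) ∈ mIdeal := by
      refine add_mem Aux.yy_mem (Ideal.mul_mem_left _ _ ?_)
      have := add_mem hα_mem hβ_mem
      exact Ideal.pow_le_self (by norm_num) this
    set Φ := Aux.Phi hA hB with hΦdef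
    have hbij : Function.Bijective Φ := by
      apply Aux.psi_bijective_of_linear e₀ 1 he₀ne one_ne_zero
      · have hx : Φ xx = xx * er := Aux.Phi_xx hA hB
        rw [hx]
        have : xx * er - MvPowerSeries.C (σ := Fin 2) (R := ℂ) e₀ * xx
            = xx * (er - MvPowerSeries.C (σ := Fin 2) (R := ℂ) e₀) := by ring
        rw [this]
        exact Aux.mul_mem_sq Aux.xx_mem herm
      · have hy : Φ yy = yy + CCh*(α + β) := Aux.Phi_yy hA hB
        rw [hy, map_one, one_mul]
        have : yy + CCh*(α + β) - yy = CCh*(α + β) := by ring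
        rw [this]
        exact Ideal.mul_mem_left _ _ (add_mem hα_mem hβ_mem)
    refine ⟨AlgEquiv.ofBijective Φ hbij, 1, isUnit_one, ?_⟩
    rw [one_mul]
    have hval : (AlgEquiv.ofBijective Φ hbij) (yy ^ 2 - xx ^ 4)
        = (yy + CCh*(α + β))^2 - xx^4 * (MvPowerSeries.C (σ := Fin 2) (R := ℂ) (1/4) * W^2) := by
      show Φ (yy ^ 2 - xx ^ 4) = _
      rw [map_sub, map_pow, map_pow, Aux.Phi_xx hA hB, Aux.Phi_yy hA hB, mul_pow, her]
    rw [hval]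
    have hhc : CCh*CCh = MvPowerSeries.C (σ := Fin 2) (R := ℂ) (1/4) := by
      rw [hCCh, ← map_mul, show (1/2 * (1/2) : ℂ) = 1/4 by norm_num]
    have hLL : (yy + xx^2 - xx^2*δ) * (yy + CCh*(xx^2*δ) + M*t) = (yy + α)*(yy + β) := by
      rw [hαdef, hβdef]
      ring
    rw [hLL]
    linear_combination (-((α+β)*yy))*hh + (-((α-β)^2) - 4*α*β)*hhc
      + (-(α*β))*h14 + (MvPowerSeries.C (σ := Fin 2) (R := ℂ) (1/4)*(xx^2*W + α - β))*hW2
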